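/- Let (A,B) be a c/d-cross-intersecting pair of subsets of [n] with |A|·|B| = 2^n, where c/d is irreducible with 0 < c/d < 1. Then B, viewed as a set of characteristic vectors, is a linear subspace of 𝔽₂ⁿ; in particular, for any B₁, B₂ ∈ B the symmetric difference B₁ Δ B₂ belongs to B. -/

import Mathlib

open Finset

namespace CrossAux

variable {n : ℕ}

/-- characteristic vector -/
def chi (s : Finset (Fin n)) : Fin n → ZMod 2 := fun i => if i ∈ s then 1 else 0

lemma chi_injective : Function.Injective (chi (n := n)) := by
  intro s t h
  ext i
  have := congrFun h i
  simp only [chi] at this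
  by_cases hs : i ∈ s <;> by_cases ht : i ∈ t <;> simp [hs, ht] at this ⊢

lemma chi_symmDiff (s t : Finset (Fin n)) : chi (symmDiff s t) = chi s + chi t := by
  funext i
  simp only [chi, Pi.add_apply, Finset.mem_symmDiff]
  by_cases hs : i ∈ s <;> by_cases ht : i ∈ t <;> simp [hs, ht] <;> decide

/-- the dot product bilinear form on `Fin n → ZMod 2` -/
def dp : LinearMap.BilinForm (ZMod 2) (Fin n → ZMod 2) :=
  LinearMap.mk₂ (ZMod 2) (fun x y => ∑ i, x i * y i)
    (by intros; simp [add_mul, Finset.sum_add_distrib])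
    (by intros; simp [Finset.mul_sum, mul_assoc])
    (by intros; simp [mul_add, Finset.sum_add_distrib])
    (by intros; simp [Finset.mul_sum]; ring_nf; simp [mul_comm, mul_left_comm])

lemma dp_apply (x y : Fin n → ZMod 2) : dp x y = ∑ i, x i * y i := rfl

lemma dp_symm (x y : Fin n → ZMod 2) : dp x y = dp y x := by
  simp [dp_apply, mul_comm]

lemma dp_refl : (dp (n := n)).IsRefl := fun x y h => by rwa [dp_symm]

lemma dp_nondeg : (dp (n := n)).Nondegenerate := by
  have h : ∀ x : Fin n → ZMod 2, (∀ y, dp x y = 0) → x = 0 := by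
    intro x hx
    funext i
    have := hx (Pi.single i 1)
    simp [dp_apply, Pi.single_apply, mul_ite] at this
    simpa using this
  exact ⟨h, fun x hx => h x fun y => by rw [dp_symm]; exact hx y⟩

lemma dp_chi (s t : Finset (Fin n)) : dp (chi s) (chi t) = ((s ∩ t).card : ZMod 2) := by
  simp only [dp_apply, chi]
  rw [Finset.card_eq_sum_ones (s ∩ t), Nat.cast_sum]
  rw [← Finset.sum_subset (Finset.subset_univ (s ∩ t))]
  · apply Finset.sum_congr rfl
    intro i hi
    simp only [Finset.mem_inter] at hi
    simp [hi.1, hi.2]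
  · intro i _ hi
    simp only [Finset.mem_inter, not_and] at hi
    by_cases hs : i ∈ s <;> simp [hs, hi]

end CrossAux

open CrossAux

theorem maximal_B_subspace (n c d : ℕ) (hn : 0 < n) (hc : 0 < c) (hcd : c < d)
    (hcop : Nat.Coprime c d)
    (A B : Finset (Finset (Fin n)))
    (hcross : ∀ a ∈ A, ∀ b ∈ B, d * (a ∩ b).card = c * b.card)
    (hmax : A.card * B.card = 2 ^ n) :
    (∃ W : Submodule (ZMod 2) (Fin n → ZMod 2),
      ∀ s : Finset (Fin n), s ∈ B ↔ (fun i => if i ∈ s then (1 : ZMod 2) else 0) ∈ W) ∧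
    ∀ b₁ ∈ B, ∀ b₂ ∈ B, symmDiff b₁ b₂ ∈ B := by
  have hd : 0 < d := lt_trans hc hcd
  -- A and B nonempty
  have hprod : 0 < A.card * B.card := by rw [hmax]; positivity
  have hA0 : 0 < A.card := Nat.pos_of_ne_zero fun h => by simp [h] at hprod
  have hB0 : 0 < B.card := Nat.pos_of_ne_zero fun h => by simp [h] at hprod
  obtain ⟨a0, ha0⟩ := Finset.card_pos.mp hA0
  -- span of differences
  set U : Submodule (ZMod 2) (Fin n → ZMod 2) :=
    Submodule.span (ZMod 2) ((fun a => chi a + chi a0) '' ↑A) with hU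
  set W : Submodule (ZMod 2) (Fin n → ZMod 2) := dp.orthogonal U with hW
  -- every b in B has chi b in W
  have hBW : ∀ b ∈ B, chi b ∈ W := by
    intro b hb
    have key : U ≤ LinearMap.ker ((dp (n := n)).flip (chi b)) := by
      rw [hU, Submodule.span_le]
      rintro y ⟨a, ha, rfl⟩
      simp only [SetLike.mem_coe, LinearMap.mem_ker, LinearMap.flip_apply, map_add]
      show dp (chi a) (chi b) + dp (chi a0) (chi b) = 0
      have h1 := hcross a ha b hb
      have h2 := hcross a0 ha0 b hb
      have heq : (a ∩ b).card = (a0 ∩ b).card := Nat.eq_of_mul_eq_mul_left hd (h1.trans h2.symm)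
      rw [dp_chi, dp_chi, heq]
      exact CharTwo.add_self_eq_zero _
    intro y hy
    have := key hy
    exact LinearMap.mem_ker.mp this
  -- injection of A into U
  haveI : Fintype ↥U := Fintype.ofFinite _
  haveI : Fintype ↥W := Fintype.ofFinite _
  haveI : Fintype ↑(U : Set (Fin n → ZMod 2)) := Fintype.ofFinite _
  haveI : Fintype ↑(W : Set (Fin n → ZMod 2)) := Fintype.ofFinite _
  have hAcard : A.card ≤ Fintype.card U := by
    have : ∀ a ∈ A, chi a + chi a0 ∈ (U : Set (Fin n → ZMod 2)).toFinset := by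
      intro a ha
      rw [Set.mem_toFinset]
      exact Submodule.subset_span ⟨a, ha, rfl⟩
    have hinj : Set.InjOn (fun a => chi a + chi a0) ↑A := by
      intro s hs t ht h
      simp only at h
      have : chi s = chi t := by
        have := congrArg (· + chi a0) h
        simpa [add_assoc, CharTwo.add_self_eq_zero] using this
      exact chi_injective this
    calc A.card ≤ (U : Set (Fin n → ZMod 2)).toFinset.card :=
            Finset.card_le_card_of_injOn _ this hinj
      _ = Fintype.card U := by simp [Set.toFinset_card]
  -- injection of B into W
  have hBcard : B.card ≤ Fintype.card W := by
    have hmem : ∀ b ∈ B, chi b ∈ (W : Set (Fin n → ZMod 2)).toFinset := by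
      intro b hb; rw [Set.mem_toFinset]; exact hBW b hb
    calc B.card ≤ (W : Set (Fin n → ZMod 2)).toFinset.card :=
            Finset.card_le_card_of_injOn _ hmem (chi_injective.injOn)
      _ = Fintype.card W := by simp [Set.toFinset_card]
  -- dimension count
  have hcardU : Fintype.card U = 2 ^ Module.finrank (ZMod 2) U := by
    rw [Module.card_eq_pow_finrank (K := ZMod 2), ZMod.card]
  have hcardW : Fintype.card W = 2 ^ Module.finrank (ZMod 2) W := by
    rw [Module.card_eq_pow_finrank (K := ZMod 2), ZMod.card]
  have hfinV : Module.finrank (ZMod 2) (Fin n → ZMod 2) = n := by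
    rw [Module.finrank_pi]; simp
  have hUle : Module.finrank (ZMod 2) U ≤ n := le_trans (Submodule.finrank_le U) (le_of_eq hfinV)
  have hfinW : Module.finrank (ZMod 2) W = n - Module.finrank (ZMod 2) U := by
    rw [hW, LinearMap.BilinForm.finrank_orthogonal dp_nondeg U, hfinV]
  set k := Module.finrank (ZMod 2) U with hk
  -- equality of cardinalities
  have hBeq : B.card = Fintype.card W := by
    have h1 : 2 ^ n ≤ 2 ^ k * B.card := by
      calc 2 ^ n = A.card * B.card := hmax.symm
        _ ≤ Fintype.card U * B.card := Nat.mul_le_mul_right _ hAcard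
        _ = 2 ^ k * B.card := by rw [hcardU]
    have h2 : 2 ^ k * 2 ^ (n - k) = 2 ^ n := by
      rw [← pow_add]; congr 1; omega
    have hge : 2 ^ (n - k) ≤ B.card := by
      have := h1
      rw [← h2] at this
      exact Nat.le_of_mul_le_mul_left this (Nat.pow_pos (n := k) two_pos)
    have hle : B.card ≤ 2 ^ (n - k) := by
      rw [hcardW, hfinW] at hBcard; exact hBcard
    rw [hcardW, hfinW]
    omega
  -- B equals W as sets of characteristic vectors
  have hiff : ∀ s : Finset (Fin n), s ∈ B ↔ chi s ∈ W := by
    intro s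
    constructor
    · exact hBW s
    · intro hs
      have himg : B.image chi = (W : Set (Fin n → ZMod 2)).toFinset := by
        apply Finset.eq_of_subset_of_card_le
        · intro x hx
          rw [Finset.mem_image] at hx
          obtain ⟨b, hb, rfl⟩ := hx
          rw [Set.mem_toFinset]; exact hBW b hb
        · rw [Finset.card_image_of_injective _ chi_injective]
          have : (W : Set (Fin n → ZMod 2)).toFinset.card = Fintype.card W := by
            simp [Set.toFinset_card]
          omega
      have : chi s ∈ B.image chi := by
        rw [himg, Set.mem_toFinset]; exact hs
      rw [Finset.mem_image] at this
      obtain ⟨b, hb, hbe⟩ := this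
      rwa [← chi_injective hbe]
  refine ⟨⟨W, fun s => hiff s⟩, ?_⟩
  intro b₁ hb₁ b₂ hb₂
  rw [hiff, chi_symmDiff]
  exact W.add_mem ((hiff b₁).mp hb₁) ((hiff b₂).mp hb₂)
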